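/- The quotient ℤ[x_1, …, x_n, t]/S, taken as a quotient of modules over the subring ℤ[t^{k+1}] ⊆ S, is a free ℤ[t^{k+1}]-module of rank k with basis given by the residue classes of t, t², …, t^k. -/

import Mathlib

open MvPolynomial

/-- The polynomial ring `ℤ[x_1, …, x_n, t]`: `Sum.inl j₀` represents `x_{j₀+1}`
and `Sum.inr ()` represents `t`. -/
abbrev Rpoly (n : ℕ) := MvPolynomial (Fin n ⊕ Unit) ℤ

/-- The variable `t`. -/
noncomputable def tvar (n : ℕ) : Rpoly n := X (Sum.inr ())

/-- The subring `S` of `ℤ[x_1, …, x_n, t]` generated by the elements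
`x_j·t^{i-1}` for `1 ≤ i ≤ k+1`, `1 ≤ j ≤ n`, together with `t^{k+1}`. -/
noncomputable def Sring (k n : ℕ) : Subring (Rpoly n) :=
  Subring.closure
    ({p | ∃ i ≤ k, ∃ j : Fin n, p = X (Sum.inl j) * tvar n ^ i} ∪ {tvar n ^ (k + 1)})

/-- The subring `ℤ[t^{k+1}]` of `ℤ[x_1, …, x_n, t]`. -/
noncomputable def Cring (k n : ℕ) : Subring (Rpoly n) :=
  Subring.closure {tvar n ^ (k + 1)}

namespace Stmt8

/-- Evaluation killing the `x` variables, sending `t` to `Polynomial.X`. -/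
noncomputable def ev0 (n : ℕ) : Rpoly n →ₐ[ℤ] Polynomial ℤ :=
  aeval (Sum.elim (fun _ => 0) (fun _ => Polynomial.X))

lemma ev0_t (n : ℕ) : ev0 n (tvar n) = Polynomial.X := by
  simp [ev0, tvar]

lemma ev0_x (n : ℕ) (j : Fin n) : ev0 n (X (Sum.inl j)) = 0 := by
  simp [ev0]

/-- Polynomials supported in degrees divisible by `k+1`. -/
noncomputable def D (k : ℕ) : Subring (Polynomial ℤ) where
  carrier := {p | ∀ m, ¬ (k + 1) ∣ m → p.coeff m = 0}
  zero_mem' := by intro m _; simp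
  one_mem' := by
    intro m hm
    have h0 : m ≠ 0 := by rintro rfl; exact hm (dvd_zero _)
    simp [Polynomial.coeff_one, h0]
  add_mem' := by
    intro p q hp hq m hm
    simp [Polynomial.coeff_add, hp m hm, hq m hm]
  neg_mem' := by
    intro p hp m hm
    simp [hp m hm]
  mul_mem' := by
    intro p q hp hq m hm
    rw [Polynomial.coeff_mul]
    apply Finset.sum_eq_zero
    rintro ⟨a, b⟩ hab
    rw [Finset.HasAntidiagonal.mem_antidiagonal] at hab
    by_cases ha : (k + 1) ∣ a
    · have hb : ¬ (k + 1) ∣ b := fun hb => hm (hab ▸ dvd_add ha hb)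
      simp [hq b hb]
    · simp [hp a ha]

lemma Xpow_mem_D (k : ℕ) : (Polynomial.X : Polynomial ℤ) ^ (k + 1) ∈ D k := by
  intro m hm
  rw [Polynomial.coeff_X_pow]
  have : m ≠ k + 1 := by rintro rfl; exact hm dvd_rfl
  simp [this]

lemma Cring_le_Sring (k n : ℕ) : Cring k n ≤ Sring k n :=
  Subring.closure_mono (Set.subset_union_right)

lemma ev0_Sring (k n : ℕ) : ∀ p ∈ Sring k n, ev0 n p ∈ D k := by
  intro p hp
  induction hp using Subring.closure_induction with
  | mem x hx =>
    rcases hx with ⟨i, _, j, rfl⟩ | rfl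
    · rw [map_mul, ev0_x]
      simp only [zero_mul]
      exact zero_mem _
    · rw [map_pow, ev0_t]
      exact Xpow_mem_D k
  | zero => exact (map_zero (ev0 n)) ▸ zero_mem _
  | one => exact (map_one (ev0 n)) ▸ one_mem _
  | add x y hx hy ihx ihy => rw [map_add]; exact add_mem ihx ihy
  | neg x hx ihx => rw [map_neg]; exact neg_mem ihx
  | mul x y hx hy ihx ihy => rw [map_mul]; exact mul_mem ihx ihy

lemma ev0_span (k n : ℕ) :
    ∀ p ∈ Submodule.span (Cring k n) ((Sring k n : Set (Rpoly n))), ev0 n p ∈ D k := by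
  intro p hp
  induction hp using Submodule.span_induction with
  | mem x hx => exact ev0_Sring k n x hx
  | zero => exact (map_zero (ev0 n)) ▸ zero_mem _
  | add x y hx hy ihx ihy => rw [map_add]; exact add_mem ihx ihy
  | smul c x hx ihx =>
    have : c • x = (c : Rpoly n) * x := rfl
    rw [this, map_mul]
    exact mul_mem (ev0_Sring k n _ (Cring_le_Sring k n c.2)) ihx

lemma sigma_fix (k n : ℕ) : ∀ c ∈ Cring k n, Polynomial.aeval (tvar n) (ev0 n c) = c := by
  intro c hc
  induction hc using Subring.closure_induction with
  | mem x hx =>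
    rcases hx with rfl
    rw [map_pow, ev0_t, map_pow, Polynomial.aeval_X]
  | zero => simp
  | one => simp
  | add x y hx hy ihx ihy => rw [map_add, map_add, ihx, ihy]
  | neg x hx ihx => rw [map_neg, map_neg, ihx]
  | mul x y hx hy ihx ihy => rw [map_mul, map_mul, ihx, ihy]

lemma ev0_inj_Cring (k n : ℕ) {c : Rpoly n} (hc : c ∈ Cring k n) (h : ev0 n c = 0) :
    c = 0 := by
  have := sigma_fix k n c hc
  rw [h, map_zero] at this
  exact this.symm

/-- Extracting coefficients: if each `c j ∈ D k` and `∑ c j * X^(j+1) ∈ D k` then `c j = 0`. -/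
lemma coeff_extract (k : ℕ) (c : Fin k → Polynomial ℤ) (hc : ∀ j, c j ∈ D k)
    (h : (∑ j, c j * Polynomial.X ^ ((j : ℕ) + 1)) ∈ D k) : ∀ j, c j = 0 := by
  intro j
  ext m
  simp only [Polynomial.coeff_zero]
  by_cases hm : (k + 1) ∣ m
  · -- look at coefficient m + j + 1 of the sum
    have hN : ¬ (k + 1) ∣ (m + (j : ℕ) + 1) := by
      intro hd
      have h1 : (k + 1) ∣ ((j : ℕ) + 1) := by
        have : m + (j : ℕ) + 1 = m + ((j : ℕ) + 1) := by ring
        rw [this] at hd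
        exact (Nat.dvd_add_right hm).mp hd
      have := Nat.le_of_dvd (by omega) h1
      have := j.2
      omega
    have hcoeff := h (m + (j : ℕ) + 1) hN
    rw [Polynomial.finset_sum_coeff] at hcoeff
    rw [Finset.sum_eq_single j] at hcoeff
    · rwa [Polynomial.coeff_mul_X_pow', if_pos (by omega),
        show m + (j : ℕ) + 1 - ((j : ℕ) + 1) = m by omega] at hcoeff
    · intro j' _ hj'
      rw [Polynomial.coeff_mul_X_pow']
      split
      · rename_i hle
        apply hc j'
        intro hdvd
        -- (k+1) ∣ m + j + 1 - (j' + 1), (k+1) ∣ m, j,j' < k ⇒ j = j'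
        obtain ⟨e, he⟩ := hm
        obtain ⟨f, hf⟩ := hdvd
        have hj : (j : ℕ) < k := j.2
        have hj2 : (j' : ℕ) < k := j'.2
        have heq : (k + 1) * f + ((j' : ℕ) + 1) = (k + 1) * e + ((j : ℕ) + 1) := by omega
        have : f = e := by nlinarith [heq]
        subst this
        have : (j' : ℕ) = (j : ℕ) := by omega
        exact hj' (Fin.ext this)
      · rfl
    · intro hj
      exact absurd (Finset.mem_univ j) hj
  · exact hc j m hm

end Stmt8
namespace Stmt8

lemma monomial_x_mem (k n : ℕ) (b : (Fin n ⊕ Unit) →₀ ℕ) (hb : b (Sum.inr ()) = 0) :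
    (monomial b 1 : Rpoly n) ∈ Sring k n := by
  rw [monomial_eq, map_one, one_mul]
  apply Subring.prod_mem
  intro v hv
  apply pow_mem
  apply Subring.subset_closure
  left
  rcases v with j | u
  · exact ⟨0, Nat.zero_le _, j, by simp⟩
  · exfalso
    have : b (Sum.inr u) ≠ 0 := Finsupp.mem_support_iff.mp hv
    cases u
    exact this hb

lemma smul_mem' (k n : ℕ) {P : Submodule (Cring k n) (Rpoly n)} (c : Rpoly n)
    (hc : c ∈ Cring k n) {x : Rpoly n} (hx : x ∈ P) : c * x ∈ P :=
  P.smul_mem ⟨c, hc⟩ hx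

lemma tpow_mem_Cring (k n : ℕ) (e : ℕ) : tvar n ^ ((k + 1) * e) ∈ Cring k n := by
  rw [pow_mul]
  exact pow_mem (Subring.subset_closure (Set.mem_singleton _)) e

lemma monomial_mem (k n : ℕ) (hk : 1 ≤ k) (a : (Fin n ⊕ Unit) →₀ ℕ) :
    (monomial a 1 : Rpoly n) ∈ Submodule.span (Cring k n)
      ((Sring k n : Set (Rpoly n)) ∪ Set.range (fun i : Fin k => tvar n ^ ((i : ℕ) + 1))) := by
  set m := a (Sum.inr ()) with hm
  set e := m / (k + 1) with he
  set r := m % (k + 1) with hr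
  have hre : (k + 1) * e + r = m := Nat.div_add_mod m (k + 1)
  have hrlt : r < k + 1 := Nat.mod_lt _ (by omega)
  by_cases hx : ∀ j : Fin n, a (Sum.inl j) = 0
  · -- pure t monomial
    have ha : a = Finsupp.single (Sum.inr ()) m := by
      ext v
      rcases v with j | u
      · simp [hx j, Finsupp.single_apply]
      · cases u; simp [Finsupp.single_apply, ← hm]
    have hmono : (monomial a 1 : Rpoly n) = tvar n ^ ((k + 1) * e) * tvar n ^ r := by
      rw [ha, tvar, X_pow_eq_monomial, X_pow_eq_monomial, monomial_mul, one_mul,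
        ← Finsupp.single_add, hre]
    rw [hmono]
    rcases Nat.eq_zero_or_pos r with hr0 | hrpos
    · apply smul_mem' k n _ (tpow_mem_Cring k n e)
      rw [hr0, pow_zero]
      exact Submodule.subset_span (Or.inl (one_mem (Sring k n)))
    · apply smul_mem' k n _ (tpow_mem_Cring k n e)
      apply Submodule.subset_span
      right
      refine ⟨⟨r - 1, by omega⟩, ?_⟩
      simp only []
      congr 1
      omega
  · -- some x appears: the monomial is in Sring
    push_neg at hx
    obtain ⟨j0, hj0⟩ := hx
    apply Submodule.subset_span
    left
    set b : (Fin n ⊕ Unit) →₀ ℕ :=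
      a - (Finsupp.single (Sum.inl j0) 1 + Finsupp.single (Sum.inr ()) m) with hb
    have h1 : 1 ≤ a (Sum.inl j0) := Nat.one_le_iff_ne_zero.mpr hj0
    have hbr : b (Sum.inr ()) = 0 := by
      simp [hb, Finsupp.tsub_apply, Finsupp.add_apply, Finsupp.single_apply, ← hm]
    have hsum : Finsupp.single (Sum.inr ()) ((k + 1) * e)
        + (Finsupp.single (Sum.inl j0) 1 + Finsupp.single (Sum.inr ()) r) + b = a := by
      ext v
      rcases v with j | u
      · rcases eq_or_ne j j0 with rfl | hjj
        · simp [hb, Finsupp.tsub_apply, Finsupp.add_apply, Finsupp.single_apply]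
          omega
        · simp [hb, Finsupp.tsub_apply, Finsupp.add_apply, Finsupp.single_apply,
            Ne.symm hjj]
      · cases u
        simp [hb, Finsupp.tsub_apply, Finsupp.add_apply, Finsupp.single_apply, ← hm]
        omega
    have hX : (X (Sum.inl j0) : Rpoly n) = monomial (Finsupp.single (Sum.inl j0) 1) 1 := by
      rw [← pow_one (X (Sum.inl j0) : Rpoly n), X_pow_eq_monomial]
    have key : (monomial a 1 : Rpoly n)
        = tvar n ^ ((k + 1) * e) * (X (Sum.inl j0) * tvar n ^ r) * monomial b 1 := by
      rw [tvar, X_pow_eq_monomial, X_pow_eq_monomial, hX]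
      simp only [monomial_mul, one_mul]
      rw [hsum]
    rw [key]
    refine mul_mem (mul_mem ?_ ?_) (monomial_x_mem k n b hbr)
    · exact Cring_le_Sring k n (tpow_mem_Cring k n e)
    · exact Subring.subset_closure (Or.inl ⟨r, by omega, j0, rfl⟩)

end Stmt8
namespace Stmt8

lemma intCast_mul_mem_span (k n : ℕ) {P : Submodule (Cring k n) (Rpoly n)}
    (c : ℤ) {x : Rpoly n} (hx : x ∈ P) : (c : Rpoly n) * x ∈ P :=
  smul_mem' k n _ (intCast_mem (Cring k n) c) hx

lemma top_span (k n : ℕ) (hk : 1 ≤ k) :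
    (⊤ : Submodule (Cring k n) (Rpoly n)) ≤ Submodule.span (Cring k n)
      ((Sring k n : Set (Rpoly n)) ∪ Set.range (fun i : Fin k => tvar n ^ ((i : ℕ) + 1))) := by
  intro p _
  rw [p.as_sum]
  apply Submodule.sum_mem
  intro v _
  have hmono := monomial_mem k n hk v
  have hrw : (monomial v (coeff v p) : Rpoly n)
      = ((coeff v p : ℤ) : Rpoly n) * monomial v 1 := by
    rw [← eq_intCast (MvPolynomial.C : ℤ →+* Rpoly n) (coeff v p), C_mul_monomial, mul_one]
  rw [hrw]
  exact intCast_mul_mem_span k n _ hmono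

end Stmt8

set_option maxHeartbeats 1600000 in
set_option synthInstance.maxHeartbeats 1000000 in
theorem stmt_8 (k n : ℕ) (hk : 1 ≤ k) (hn : 2 ≤ n) :
    ∃ b : Module.Basis (Fin k) (Cring k n)
      (Rpoly n ⧸ Submodule.span (Cring k n) ((Sring k n : Set (Rpoly n)))),
      ∀ i : Fin k, b i = Submodule.Quotient.mk (tvar n ^ ((i : ℕ) + 1)) := by
  classical
  set N := Submodule.span (Cring k n) ((Sring k n : Set (Rpoly n))) with hN
  set v : Fin k → (Rpoly n ⧸ N) :=
    fun i => Submodule.Quotient.mk (tvar n ^ ((i : ℕ) + 1)) with hv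
  have hsum : ∀ g : Fin k → Cring k n,
      ∑ i, g i • v i
        = N.mkQ (∑ i, (g i : Rpoly n) * tvar n ^ ((i : ℕ) + 1)) := by
    intro g
    rw [map_sum]
    apply Finset.sum_congr rfl
    intro i _
    have : (g i : Rpoly n) * tvar n ^ ((i : ℕ) + 1) = g i • (tvar n ^ ((i : ℕ) + 1)) := rfl
    rw [this, map_smul, Submodule.mkQ_apply]
  have hli : LinearIndependent (Cring k n) v := by
    rw [Fintype.linearIndependent_iff]
    intro g hg
    have hPmem : (∑ i, (g i : Rpoly n) * tvar n ^ ((i : ℕ) + 1)) ∈ N := by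
      rw [hsum g] at hg
      rw [Submodule.mkQ_apply, Submodule.Quotient.mk_eq_zero] at hg
      exact hg
    have hev : Stmt8.ev0 n (∑ i, (g i : Rpoly n) * tvar n ^ ((i : ℕ) + 1)) ∈ Stmt8.D k :=
      Stmt8.ev0_span k n _ hPmem
    have hev' : Stmt8.ev0 n (∑ i, (g i : Rpoly n) * tvar n ^ ((i : ℕ) + 1))
        = ∑ i, Stmt8.ev0 n (g i : Rpoly n) * Polynomial.X ^ ((i : ℕ) + 1) := by
      rw [map_sum]
      apply Finset.sum_congr rfl
      intro i _
      rw [map_mul, map_pow, Stmt8.ev0_t]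
    rw [hev'] at hev
    have hz := Stmt8.coeff_extract k (fun i => Stmt8.ev0 n (g i : Rpoly n))
      (fun i => Stmt8.ev0_Sring k n _ (Stmt8.Cring_le_Sring k n (g i).2)) hev
    intro i
    exact Subtype.ext (Stmt8.ev0_inj_Cring k n (g i).2 (hz i))
  have hsp : ⊤ ≤ Submodule.span (Cring k n) (Set.range v) := by
    intro q _
    obtain ⟨p, rfl⟩ := Submodule.Quotient.mk_surjective N q
    have hp : p ∈ Submodule.span (Cring k n)
        ((Sring k n : Set (Rpoly n)) ∪ Set.range (fun i : Fin k => tvar n ^ ((i : ℕ) + 1))) :=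
      Stmt8.top_span k n hk Submodule.mem_top
    have hmem : N.mkQ p ∈ Submodule.map N.mkQ (Submodule.span (Cring k n)
        ((Sring k n : Set (Rpoly n)) ∪ Set.range (fun i : Fin k => tvar n ^ ((i : ℕ) + 1)))) :=
      Submodule.mem_map_of_mem hp
    rw [Submodule.map_span] at hmem
    have hsub : N.mkQ '' ((Sring k n : Set (Rpoly n))
        ∪ Set.range (fun i : Fin k => tvar n ^ ((i : ℕ) + 1))) ⊆ insert 0 (Set.range v) := by
      rintro _ ⟨x, hx | ⟨i, rfl⟩, rfl⟩
      · left
        rw [Submodule.mkQ_apply, Submodule.Quotient.mk_eq_zero]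
        exact Submodule.subset_span hx
      · right
        exact ⟨i, rfl⟩
    have h2 : Submodule.span (Cring k n) (N.mkQ '' ((Sring k n : Set (Rpoly n))
        ∪ Set.range (fun i : Fin k => tvar n ^ ((i : ℕ) + 1))))
        ≤ Submodule.span (Cring k n) (Set.range v) := by
      apply Submodule.span_le.mpr
      intro y hy
      rcases hsub hy with rfl | hy'
      · exact (Submodule.span (Cring k n) (Set.range v)).zero_mem
      · exact Submodule.subset_span hy'
    exact h2 hmem
  refine ⟨Module.Basis.mk hli hsp, fun i => ?_⟩
  rw [Module.Basis.mk_apply]
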